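/- For any digraph D on n vertices, if l(D) denotes the length (number of arcs) of a longest directed path in D, then γ⁺ₘ(D) ≤ ⌈(2n − l(D) − 1)/4⌉. -/

import Mathlib

/-- Closed out-neighborhood `N⁺[S]` of a set `S` in the digraph with arc relation `A`. -/
noncomputable def closedOut {V : Type*} [Fintype V] [DecidableEq V]
    (A : V → V → Prop) (S : Finset V) : Finset V :=
  S ∪ @Finset.filter _ (fun v => ∃ u ∈ S, A u v) (Classical.decPred _) Finset.univ

/-- `S` is a majority out-dominating set: `|N⁺[S]| ≥ n/2`. -/
def IsMODS {V : Type*} [Fintype V] [DecidableEq V]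
    (A : V → V → Prop) (S : Finset V) : Prop :=
  2 * (closedOut A S).card ≥ Fintype.card V

/-- Set majority out-domination number `γ⁺ₘ`. -/
noncomputable def gammaM {V : Type*} [Fintype V] [DecidableEq V]
    (A : V → V → Prop) : ℕ :=
  sInf {k | ∃ S : Finset V, IsMODS A S ∧ S.card = k}

/-- Out-domination number `γ⁺`. -/
noncomputable def gammaPlus {V : Type*} [Fintype V] [DecidableEq V]
    (A : V → V → Prop) : ℕ :=
  sInf {k | ∃ S : Finset V, closedOut A S = Finset.univ ∧ S.card = k}

/-- Out-degree of a vertex. -/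
noncomputable def outDeg {V : Type*} [Fintype V] [DecidableEq V]
    (A : V → V → Prop) (v : V) : ℕ :=
  (@Finset.filter _ (fun w => A v w) (Classical.decPred _) Finset.univ).card

/-- Maximum out-degree `Δ⁺`. -/
noncomputable def DeltaPlus {V : Type*} [Fintype V] [DecidableEq V]
    (A : V → V → Prop) : ℕ :=
  Finset.univ.sup (outDeg A)


/-- If `l` is the length of a longest directed path of `D`, then
`γ⁺ₘ(D) ≤ ⌈(2n - l - 1)/4⌉`. -/
theorem stmt6 {V : Type*} [Fintype V] [DecidableEq V]
    (A : V → V → Prop) (l : ℕ)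
    (hl : IsGreatest {m | ∃ f : Fin (m + 1) → V, Function.Injective f ∧
      ∀ i : Fin m, A (f i.castSucc) (f i.succ)} l) :
    gammaM A ≤ (2 * Fintype.card V - (l + 1) + 3) / 4 := by
  obtain ⟨⟨f, hfinj, hfarc⟩, -⟩ := hl
  set n := Fintype.card V with hn
  have hln : l + 1 ≤ n := by
    have := Fintype.card_le_of_injective f hfinj
    simpa using this
  set p := min ((l+1)/2) ((n+3)/4) with hp
  have hp1 : p ≤ (l+1)/2 := min_le_left _ _
  have hp2 : p ≤ (n+3)/4 := min_le_right _ _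
  have hp3 : p = (l+1)/2 ∨ p = (n+3)/4 := min_choice _ _
  have hp2l : 2 * p ≤ l + 1 := by omega
  set t := (n + 1 - 4*p)/2 with ht
  -- the covered prefix of the path
  have hgi : ∀ i : ℕ, i < 2*p → i < l + 1 := by omega
  let g : Fin (2*p) → V := fun i => f ⟨i, hgi i i.isLt⟩
  have hginj : Function.Injective g := by
    intro a b h
    have := congrArg Fin.val (hfinj h)
    exact Fin.ext this
  set C : Finset V := Finset.univ.image g with hCdef
  have hC : C.card = 2*p := by
    rw [hCdef, Finset.card_image_of_injective _ hginj, Finset.card_univ,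
      Fintype.card_fin]
  have htle : t ≤ (Finset.univ \ C).card := by
    rw [Finset.card_sdiff_of_subset (Finset.subset_univ _), Finset.card_univ, hC]
    omega
  obtain ⟨T, hTsub, hTcard⟩ := Finset.exists_subset_card_eq htle
  have hji : ∀ j : ℕ, j < p → 2*j < l + 1 := by omega
  set Sp : Finset V := Finset.univ.image (fun j : Fin p => f ⟨2*j, hji j j.isLt⟩)
    with hSpdef
  set S : Finset V := Sp ∪ T with hSdef
  -- C ∪ T ⊆ closedOut A S
  have hsub : C ∪ T ⊆ closedOut A S := by
    intro v hv
    rcases Finset.mem_union.mp hv with hv | hv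
    · -- v on the covered path prefix
      obtain ⟨i, -, rfl⟩ := Finset.mem_image.mp hv
      rcases Nat.even_or_odd i.val with ⟨j, hj⟩ | ⟨j, hj⟩
      · -- even index: in S itself
        have hjp : j < p := by have := i.isLt; omega
        have : g i ∈ Sp := by
          rw [hSpdef]
          refine Finset.mem_image.mpr ⟨⟨j, hjp⟩, Finset.mem_univ _, ?_⟩
          show f _ = f _
          congr 1
          exact Fin.ext (by simp [g]; omega)
        exact Finset.mem_union.mpr (Or.inl (Finset.mem_union.mpr (Or.inl this)))
      · -- odd index: dominated by previous vertex
        have hjl : 2*j < l := by have := i.isLt; omega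
        have hjp : j < p := by have := i.isLt; omega
        have harc := hfarc ⟨2*j, hjl⟩
        simp only [Fin.castSucc_mk, Fin.succ_mk] at harc
        have hmem : f ⟨2*j, hji j hjp⟩ ∈ S := by
          refine Finset.mem_union.mpr (Or.inl ?_)
          rw [hSpdef]
          exact Finset.mem_image.mpr ⟨⟨j, hjp⟩, Finset.mem_univ _, rfl⟩
        refine Finset.mem_union.mpr (Or.inr
          ((@Finset.mem_filter _ _ (Classical.decPred _) _ _).mpr
          ⟨Finset.mem_univ _, ⟨f ⟨2*j, hji j hjp⟩, hmem, ?_⟩⟩))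
        have hveq : g i = f ⟨2*j+1, by omega⟩ := by
          show f _ = f _
          congr 1
          exact Fin.ext (by simp [g]; omega)
        rw [hveq]
        convert harc using 2
    · -- v in T: in S itself
      exact Finset.mem_union.mpr (Or.inl (Finset.mem_union.mpr (Or.inr hv)))
  have hdisj : Disjoint C T := by
    refine Finset.disjoint_left.mpr fun v hvC hvT => ?_
    have := hTsub hvT
    rw [Finset.mem_sdiff] at this
    exact this.2 hvC
  have hcardCT : (C ∪ T).card = 2*p + t := by
    rw [Finset.card_union_of_disjoint hdisj, hC, hTcard]
  have hmods : IsMODS A S := by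
    unfold IsMODS
    have h1 : (C ∪ T).card ≤ (closedOut A S).card := Finset.card_le_card hsub
    rw [hcardCT] at h1
    rw [← hn]
    omega
  have hScard : S.card ≤ p + t := by
    calc S.card ≤ Sp.card + T.card := Finset.card_union_le _ _
      _ ≤ p + t := by
          have : Sp.card ≤ p := by
            rw [hSpdef]
            calc (Finset.univ.image _).card ≤ (Finset.univ : Finset (Fin p)).card :=
              Finset.card_image_le
              _ = p := by simp
          omega
  have hg : gammaM A ≤ S.card := Nat.sInf_le ⟨S, hmods, rfl⟩
  have : p + t ≤ (2 * n - (l + 1) + 3) / 4 := by omega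
  omega
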